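/- arXiv:math/9902048 — 3 statements merged into one kernel-verified Lean document; each statement's English description precedes it below -/
import Mathlib

section
/- Every element of 𝔹_G can be written as a finite sum of triples, i.e., of elements of the form [x̂, ŷ, ẑ] where x, y, z ∈ G satisfy x·y·z ∈ [G,G]. -/
namespace SingOrbit

variable (G : Type*) [Group G]

/-- The map from conjugacy classes to the abelianization. -/
def classAb : ConjClasses G → Additive (Abelianization G) :=
  Quotient.lift (fun g : G => Additive.ofMul (Abelianization.of g)) <| by
    intro a b hab
    obtain ⟨c, hc⟩ := isConj_iff.mp (hab : IsConj a b)
    subst hc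
    show Additive.ofMul (Abelianization.of a) = Additive.ofMul (Abelianization.of (c * a * c⁻¹))
    congr 1
    rw [map_mul, map_mul, map_inv, mul_comm (Abelianization.of c) (Abelianization.of a),
      mul_inv_cancel_right]

/-- Nontrivial conjugacy classes. -/
def NCC := {c : ConjClasses G // c ≠ 1}

/-- The homomorphism `φ` from the free abelian group on the nontrivial conjugacy classes
to the abelianization, sending a conjugacy class to the image of any representative. -/
noncomputable def phi : FreeAbelianGroup (NCC G) →+ Additive (Abelianization G) :=
  FreeAbelianGroup.lift fun c => classAb G c.1

/-- The basis element of the free abelian group corresponding to a conjugacy class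
(`0` for the trivial class). -/
noncomputable def clsC (c : ConjClasses G) : FreeAbelianGroup (NCC G) :=
  letI := Classical.dec (c = 1)
  if h : c = 1 then 0 else FreeAbelianGroup.of ⟨c, h⟩

/-- The basis element corresponding to the conjugacy class of a group element. -/
noncomputable def clsF (x : G) : FreeAbelianGroup (NCC G) := clsC G (ConjClasses.mk x)

/-- The subgroup generated by the elements `x̂ + x̂⁻¹`. -/
noncomputable def NSub : AddSubgroup (FreeAbelianGroup (NCC G)) :=
  AddSubgroup.closure {a | ∃ x : G, a = clsF G x + clsF G x⁻¹}

/-- The group `𝔹_G` of singular orbit data: `(ker φ) / N`. -/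
noncomputable def SOD := (phi G).ker ⧸ ((NSub G).addSubgroupOf (phi G).ker)

noncomputable instance : AddCommGroup (SOD G) :=
  inferInstanceAs (AddCommGroup ((phi G).ker ⧸ ((NSub G).addSubgroupOf (phi G).ker)))

variable {G}

lemma classAb_mk (x : G) :
    classAb G (ConjClasses.mk x) = Additive.ofMul (Abelianization.of x) := rfl

lemma mk_eq_one_iff {x : G} : ConjClasses.mk x = 1 ↔ x = 1 := by
  rw [ConjClasses.one_eq_mk_one, ConjClasses.mk_eq_mk_iff_isConj, isConj_one_left]

lemma phi_of (c : NCC G) : phi G (FreeAbelianGroup.of c) = classAb G c.1 :=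
  FreeAbelianGroup.lift_apply_of _ _

lemma phi_clsF (x : G) : phi G (clsF G x) = Additive.ofMul (Abelianization.of x) := by
  rw [clsF, clsC]
  split_ifs with h
  · have hx : x = 1 := mk_eq_one_iff.mp h
    subst hx
    simp
  · exact (phi_of (G := G) ⟨ConjClasses.mk x, h⟩).trans (classAb_mk x)

/-- The element of the free abelian group associated to a list of group elements. -/
noncomputable def sumF (l : List G) : FreeAbelianGroup (NCC G) := (l.map (clsF G)).sum

lemma sumF_nil : sumF ([] : List G) = 0 := rfl

lemma sumF_cons (a : G) (t : List G) : sumF (a :: t) = clsF G a + sumF t := by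
  simp [sumF]

lemma phi_sumF (l : List G) :
    phi G (sumF l) = Additive.ofMul (Abelianization.of l.prod) := by
  induction l with
  | nil => simp [sumF_nil]
  | cons a t ih =>
    rw [sumF_cons, map_add, phi_clsF, ih, List.prod_cons, map_mul, ofMul_mul]

lemma abOf_eq_one_iff {x : G} : Abelianization.of x = 1 ↔ x ∈ commutator G :=
  QuotientGroup.eq_one_iff x

lemma sumF_mem_ker {l : List G} (h : l.prod ∈ commutator G) : sumF l ∈ (phi G).ker := by
  rw [AddMonoidHom.mem_ker, phi_sumF, abOf_eq_one_iff.mpr h]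
  rfl

/-- The singular orbit datum `[x̂₁, …, x̂_q]` associated to a list of group elements whose
product lies in the commutator subgroup. -/
noncomputable def data (l : List G) (h : l.prod ∈ commutator G) : SOD G :=
  (QuotientAddGroup.mk ⟨sumF l, sumF_mem_ker h⟩ : SOD G)

lemma clsF_one : clsF G (1 : G) = 0 := by
  rw [clsF, clsC]
  split_ifs with h
  · rfl
  · exact absurd (mk_eq_one_iff.mpr rfl) h

lemma gen_mem (x : G) : clsF G x + clsF G x⁻¹ ∈ NSub G :=
  AddSubgroup.subset_closure ⟨x, rfl⟩

lemma NSub_le_ker : NSub G ≤ (phi G).ker := by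
  rw [NSub, AddSubgroup.closure_le]
  rintro a ⟨x, rfl⟩
  rw [SetLike.mem_coe, AddMonoidHom.mem_ker, map_add, phi_clsF, phi_clsF]
  show Additive.ofMul (Abelianization.of x * Abelianization.of x⁻¹) = 0
  rw [← map_mul, mul_inv_cancel]
  rfl

lemma reduce (w : FreeAbelianGroup (NCC G)) :
    ∃ l : List G, w - sumF l ∈ NSub G := by
  induction w using FreeAbelianGroup.induction_on with
  | zero => exact ⟨[], by simp [sumF_nil, AddSubgroup.zero_mem]⟩
  | of c =>
    refine ⟨[c.1.out], ?_⟩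
    have hx : clsF G c.1.out = FreeAbelianGroup.of c := by
      rw [clsF, clsC]
      split_ifs with h
      · exact absurd (c.1.out_eq ▸ h) c.2
      · congr 1
        exact Subtype.ext c.1.out_eq
    simp [sumF_cons, sumF_nil, hx, AddSubgroup.zero_mem]
  | neg c _ =>
    refine ⟨[c.1.out⁻¹], ?_⟩
    have hx : clsF G c.1.out = FreeAbelianGroup.of c := by
      rw [clsF, clsC]
      split_ifs with h
      · exact absurd (c.1.out_eq ▸ h) c.2
      · congr 1
        exact Subtype.ext c.1.out_eq
    have : -FreeAbelianGroup.of c - sumF [c.1.out⁻¹]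
        = -(clsF G c.1.out + clsF G c.1.out⁻¹) := by
      rw [hx]; simp [sumF_cons, sumF_nil]; abel
    rw [this]
    exact (NSub G).neg_mem (gen_mem _)
  | add a b ha hb =>
    obtain ⟨l1, h1⟩ := ha
    obtain ⟨l2, h2⟩ := hb
    refine ⟨l1 ++ l2, ?_⟩
    have hs : sumF (l1 ++ l2) = sumF l1 + sumF l2 := by
      simp [sumF]
    have : a + b - sumF (l1 ++ l2) = (a - sumF l1) + (b - sumF l2) := by
      rw [hs]; abel
    rw [this]
    exact (NSub G).add_mem h1 h2

lemma data_eq {l1 l2 : List G} (h1 : l1.prod ∈ commutator G) (h2 : l2.prod ∈ commutator G)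
    (h : sumF l2 - sumF l1 ∈ NSub G) : data l1 h1 = data l2 h2 := by
  rw [data, data]
  refine QuotientAddGroup.eq.mpr ?_
  rw [AddSubgroup.mem_addSubgroupOf]
  show -sumF l1 + sumF l2 ∈ NSub G
  rwa [← sub_eq_neg_add]

lemma data_add {l1 l2 : List G} (h1 : l1.prod ∈ commutator G) (h2 : l2.prod ∈ commutator G) :
    data l1 h1 + data l2 h2
      = data (l1 ++ l2) (by rw [List.prod_append]; exact Subgroup.mul_mem _ h1 h2) := by
  rw [data, data, data]
  show (QuotientAddGroup.mk (⟨sumF l1, _⟩ + ⟨sumF l2, _⟩ : (phi G).ker) : SOD G) = _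
  congr 1
  apply Subtype.ext
  show sumF l1 + sumF l2 = sumF (l1 ++ l2)
  simp [sumF]

lemma tripleSumAux : ∀ (N : ℕ) (l : List G), l.length ≤ N → ∀ (h : l.prod ∈ commutator G),
    ∃ (n : ℕ) (x y z : Fin n → G)
      (hh : ∀ i, ([x i, y i, z i] : List G).prod ∈ commutator G),
      data l h = ∑ i, data [x i, y i, z i] (hh i) := by
  intro N
  induction N with
  | zero =>
    intro l hl
    match l, hl with
    | [], _ =>
      intro h
      refine ⟨0, ![], ![], ![], fun i => i.elim0, ?_⟩
      rw [Finset.univ_eq_empty, Finset.sum_empty, data]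
      exact congrArg _ (Subtype.ext (by simp [sumF_nil]))
  | succ N ih =>
  intro l hlen
  match l with
  | [] =>
    intro h
    refine ⟨0, ![], ![], ![], fun i => i.elim0, ?_⟩
    rw [Finset.univ_eq_empty, Finset.sum_empty, data]
    exact congrArg _ (Subtype.ext (by simp [sumF_nil]))
  | [a] =>
    intro h
    have h' : ([a, 1, 1] : List G).prod ∈ commutator G := by simpa using h
    refine ⟨1, ![a], ![(1 : G)], ![(1 : G)], fun i => by simpa using h', ?_⟩
    rw [Fin.sum_univ_one]
    apply data_eq
    simp [sumF_cons, sumF_nil, clsF_one, AddSubgroup.zero_mem]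
  | [a, b] =>
    intro h
    have h' : ([a, b, 1] : List G).prod ∈ commutator G := by simpa using h
    refine ⟨1, ![a], ![b], ![(1 : G)], fun i => by simpa using h', ?_⟩
    rw [Fin.sum_univ_one]
    apply data_eq
    simp [sumF_cons, sumF_nil, clsF_one, AddSubgroup.zero_mem]
  | a :: b :: c :: t =>
    intro h
    have h2 : ((a * b) :: c :: t).prod ∈ commutator G := by
      simpa [mul_assoc] using h
    have h1 : ([a, b, (a * b)⁻¹] : List G).prod ∈ commutator G := by
      simp [mul_assoc]
    have hlen' : ((a * b) :: c :: t).length ≤ N := by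
      simp only [List.length_cons] at hlen ⊢
      omega
    obtain ⟨n, x, y, z, hh, hd⟩ := ih ((a * b) :: c :: t) hlen' h2
    refine ⟨n + 1, Fin.cons a x, Fin.cons b y, Fin.cons ((a * b)⁻¹) z, ?_, ?_⟩
    · intro i
      refine Fin.cases ?_ ?_ i
      · simpa using h1
      · intro j
        simpa using hh j
    · have key : data (a :: b :: c :: t) h
          = data [a, b, (a * b)⁻¹] h1 + data ((a * b) :: c :: t) h2 := by
        rw [data_add]
        apply data_eq
        have : sumF (([a, b, (a * b)⁻¹] : List G) ++ (a * b) :: c :: t)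
            - sumF (a :: b :: c :: t)
            = clsF G (a * b) + clsF G (a * b)⁻¹ := by
          simp [sumF_cons]
          abel
        rw [this]
        exact gen_mem _
      rw [key, Fin.sum_univ_succ, hd]
      simp only [Fin.cons_zero, Fin.cons_succ]

/-- Every element of `𝔹_G` can be written as a finite sum of triples
`[x̂, ŷ, ẑ]` with `x·y·z ∈ [G,G]`. -/
theorem stmt0 (G : Type*) [Group G] (α : SOD G) :
    ∃ (n : ℕ) (x y z : Fin n → G)
      (h : ∀ i, ([x i, y i, z i] : List G).prod ∈ commutator G),
      α = ∑ i, data [x i, y i, z i] (h i) := by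
  obtain ⟨⟨w, hw⟩, rfl⟩ := QuotientAddGroup.mk_surjective α
  obtain ⟨l, hl⟩ := reduce w
  have hker : sumF l ∈ (phi G).ker := by
    have h1 : w - sumF l ∈ (phi G).ker := NSub_le_ker hl
    have : sumF l = w - (w - sumF l) := by abel
    rw [this]
    exact AddSubgroup.sub_mem _ hw h1
  have hprod : l.prod ∈ commutator G := by
    rw [AddMonoidHom.mem_ker, phi_sumF] at hker
    rw [← abOf_eq_one_iff]
    exact hker
  have heq : (QuotientAddGroup.mk ⟨w, hw⟩ : SOD G) = data l hprod := by
    rw [data, QuotientAddGroup.eq, AddSubgroup.mem_addSubgroupOf]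
    show -w + sumF l ∈ NSub G
    have : -w + sumF l = -(w - sumF l) := by abel
    rw [this]
    exact (NSub G).neg_mem hl
  rw [heq]
  exact tripleSumAux l.length l le_rfl hprod

end SingOrbit
end

section
/- Let G = S₃ be the symmetric group on three letters and let a ∈ S₃ be a 3-cycle. Then 𝔹_{S₃} is cyclic of order 2, generated by the element [â]. -/
namespace SingOrbit

variable (G : Type*) [Group G]

variable {G}

lemma threeCycle_pow_three (a : Equiv.Perm (Fin 3)) (ha : a.IsThreeCycle) : a ^ 3 = 1 := by
  have h := pow_orderOf_eq_one a
  rwa [ha.orderOf] at h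

open scoped commutatorElement

lemma threeCycle_mem_commutator (a : Equiv.Perm (Fin 3)) (ha : a.IsThreeCycle) :
    a ∈ commutator (Equiv.Perm (Fin 3)) := by
  have h3 : a ^ 3 = 1 := threeCycle_pow_three a ha
  have hne : a ≠ 1 := by
    intro h
    have horder := ha.orderOf
    rw [h, orderOf_one] at horder
    exact absurd horder (by norm_num)
  have key : ∀ b : Equiv.Perm (Fin 3), b ^ 3 = 1 → b ≠ 1 →
      ⁅Equiv.swap (0 : Fin 3) 1, b⁆ = b := by decide
  rw [← key a h3 hne, commutator_def]
  exact Subgroup.commutator_mem_commutator (Subgroup.mem_top _) (Subgroup.mem_top _)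


section S3

open Equiv

local notation "G3" => Equiv.Perm (Fin 3)

lemma s3_conj_inv (b : G3) : ConjClasses.mk b⁻¹ = ConjClasses.mk b := by
  have key : ∀ b : G3, ∃ c : G3, c * b * c⁻¹ = b⁻¹ := by decide
  obtain ⟨c, hc⟩ := key b
  rw [ConjClasses.mk_eq_mk_iff_isConj, isConj_iff]
  exact ⟨c⁻¹, by rw [← hc]; group⟩

lemma s3_clsF_inv (b : G3) : clsF G3 b⁻¹ = clsF G3 b := by
  rw [clsF, clsF, s3_conj_inv]

lemma threeCycle_ne_one (a : G3) (ha : a.IsThreeCycle) : a ≠ 1 := by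
  intro h
  have horder := ha.orderOf
  rw [h, orderOf_one] at horder
  exact absurd horder (by norm_num)

/-- A parity character on the free abelian group. -/
noncomputable def chi (a : G3) : FreeAbelianGroup (NCC G3) →+ ZMod 2 :=
  FreeAbelianGroup.lift fun c => if c.1 = ConjClasses.mk a then 1 else 0

lemma chi_clsF (a : G3) (ha1 : a ≠ 1) (x : G3) :
    chi a (clsF G3 x) = if ConjClasses.mk x = ConjClasses.mk a then 1 else 0 := by
  by_cases h : ConjClasses.mk x = 1
  · have hxa : ConjClasses.mk x ≠ ConjClasses.mk a := by
      intro h'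
      exact ha1 (mk_eq_one_iff.mp (h' ▸ h))
    rw [if_neg hxa, clsF, clsC, dif_pos h, map_zero]
  · rw [clsF, clsC, dif_neg h]
    unfold chi
    exact FreeAbelianGroup.lift_apply_of _ _

lemma chi_NSub (a : G3) (ha1 : a ≠ 1) {z : FreeAbelianGroup (NCC G3)}
    (hz : z ∈ NSub G3) : chi a z = 0 := by
  induction hz using AddSubgroup.closure_induction with
  | mem x hx =>
    obtain ⟨y, rfl⟩ := hx
    rw [map_add, chi_clsF a ha1, chi_clsF a ha1, s3_conj_inv]
    exact CharTwo.add_self_eq_zero _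
  | zero => exact map_zero _
  | add x y hx hy ihx ihy => rw [map_add, ihx, ihy, add_zero]
  | neg x hx ihx => rw [map_neg, ihx, neg_zero]

lemma s3_decomp (a : G3) (ha3 : a ^ 3 = 1) (ha1 : a ≠ 1)
    (z : FreeAbelianGroup (NCC G3)) :
    ∃ m n : ℤ, z = m • clsF G3 (Equiv.swap 0 1) + n • clsF G3 a := by
  have key : ∀ a y : G3, a ^ 3 = 1 → a ≠ 1 → y ≠ 1 →
      (∃ c : G3, c * y * c⁻¹ = Equiv.swap 0 1) ∨ (∃ c : G3, c * y * c⁻¹ = a) := by decide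
  induction z using FreeAbelianGroup.induction_on with
  | zero => exact ⟨0, 0, by simp⟩
  | of x =>
    obtain ⟨y, hy⟩ := ConjClasses.exists_rep x.1
    have hy1 : y ≠ 1 := by
      intro h
      exact x.2 (by rw [← hy, h, ← ConjClasses.one_eq_mk_one])
    have hofx : ∀ w : G3, ConjClasses.mk y = ConjClasses.mk w →
        FreeAbelianGroup.of x = clsF G3 w := by
      intro w hw
      have hx1 : x.1 = ConjClasses.mk w := by rw [← hy, hw]
      rw [clsF, clsC]
      split_ifs with h
      · exact absurd (hx1 ▸ h) x.2
      · congr 1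
        exact Subtype.ext hx1
    rcases key a y ha3 ha1 hy1 with ⟨c, hc⟩ | ⟨c, hc⟩
    · exact ⟨1, 0, by
        rw [hofx _ (ConjClasses.mk_eq_mk_iff_isConj.mpr (isConj_iff.mpr ⟨c, hc⟩))]
        simp⟩
    · exact ⟨0, 1, by
        rw [hofx _ (ConjClasses.mk_eq_mk_iff_isConj.mpr (isConj_iff.mpr ⟨c, hc⟩))]
        simp⟩
  | neg x ih =>
    obtain ⟨m, n, hmn⟩ := ih
    exact ⟨-m, -n, by rw [hmn]; rw [neg_add, neg_smul, neg_smul]⟩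
  | add x y ihx ihy =>
    obtain ⟨m1, n1, h1⟩ := ihx
    obtain ⟨m2, n2, h2⟩ := ihy
    exact ⟨m1 + m2, n1 + n2, by rw [h1, h2, add_smul, add_smul]; abel⟩

lemma s3_even (a : G3) (ha : a.IsThreeCycle) (m n : ℤ)
    (hz : m • clsF G3 (Equiv.swap 0 1) + n • clsF G3 a ∈ (phi G3).ker) : Even m := by
  have hφ : phi G3 (m • clsF G3 (Equiv.swap 0 1) + n • clsF G3 a) = 0 :=
    AddMonoidHom.mem_ker.mp hz
  rw [map_add, map_zsmul, map_zsmul, phi_clsF, phi_clsF] at hφ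
  set σ : Additive (Abelianization G3) →+ Additive ℤˣ :=
    MonoidHom.toAdditive (Abelianization.lift Equiv.Perm.sign) with hσ
  have hσφ := congrArg σ hφ
  rw [map_add, map_zsmul, map_zsmul, map_zero] at hσφ
  have hs : σ (Additive.ofMul (Abelianization.of (Equiv.swap (0 : Fin 3) 1))) =
      Additive.ofMul (-1 : ℤˣ) := by
    have : σ (Additive.ofMul (Abelianization.of (Equiv.swap (0 : Fin 3) 1))) =
        Additive.ofMul ((Abelianization.lift Equiv.Perm.sign)
          (Abelianization.of (Equiv.swap (0 : Fin 3) 1))) := rfl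
    rw [this, Abelianization.lift_apply_of, Equiv.Perm.sign_swap (by decide)]
  have hA : σ (Additive.ofMul (Abelianization.of a)) = 0 := by
    have : σ (Additive.ofMul (Abelianization.of a)) =
        Additive.ofMul ((Abelianization.lift Equiv.Perm.sign) (Abelianization.of a)) := rfl
    rw [this, Abelianization.lift_apply_of, ha.sign]
    rfl
  rw [hs, hA, smul_zero, add_zero, ← ofMul_zpow] at hσφ
  have hpow : (-1 : ℤˣ) ^ m = 1 := hσφ
  rcases Int.even_or_odd m with he | ⟨k, hk⟩
  · exact he
  · exfalso
    rw [hk, zpow_add, zpow_one, zpow_mul] at hpow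
    have h2 : (-1 : ℤˣ) ^ (2 : ℤ) = 1 := by decide
    rw [h2, one_zpow] at hpow
    exact absurd hpow (by decide)

end S3

/-- for `G = S₃` and `a` a 3-cycle, `𝔹_{S₃}` is cyclic of order 2,
generated by `[â]`. -/
theorem stmt8 (a : Equiv.Perm (Fin 3)) (ha : a.IsThreeCycle) :
    AddSubgroup.closure
        {data [a] (by rw [List.prod_singleton]; exact threeCycle_mem_commutator a ha)} = ⊤ ∧
    addOrderOf
        (data [a] (by rw [List.prod_singleton]; exact threeCycle_mem_commutator a ha)) = 2 := by
  have ha3 : a ^ 3 = 1 := threeCycle_pow_three a ha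
  have ha1 : a ≠ 1 := threeCycle_ne_one a ha
  have hmem : [a].prod ∈ commutator (Equiv.Perm (Fin 3)) := by
    rw [List.prod_singleton]; exact threeCycle_mem_commutator a ha
  have hsum : sumF [a] = clsF (Equiv.Perm (Fin 3)) a := by
    rw [sumF_cons, sumF_nil, add_zero]
  have hAker : clsF (Equiv.Perm (Fin 3)) a ∈ (phi (Equiv.Perm (Fin 3))).ker := by
    rw [AddMonoidHom.mem_ker, phi_clsF,
      abOf_eq_one_iff.mpr (threeCycle_mem_commutator a ha)]
    rfl
  have hdata : (QuotientAddGroup.mk ⟨clsF (Equiv.Perm (Fin 3)) a, hAker⟩ :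
      SOD (Equiv.Perm (Fin 3))) = data [a] hmem := by
    unfold data
    congr 1
    exact Subtype.ext hsum.symm
  haveI : Fact (Nat.Prime 2) := ⟨Nat.prime_two⟩
  constructor
  · rw [AddSubgroup.eq_top_iff']
    intro x
    obtain ⟨w, rfl⟩ := QuotientAddGroup.mk_surjective x
    obtain ⟨z, hz⟩ := w
    obtain ⟨m, n, rfl⟩ := s3_decomp a ha3 ha1 z
    obtain ⟨k, hk⟩ := s3_even a ha m n hz
    have hSS : clsF (Equiv.Perm (Fin 3)) (Equiv.swap 0 1) +
        clsF (Equiv.Perm (Fin 3)) (Equiv.swap 0 1) ∈ NSub (Equiv.Perm (Fin 3)) :=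
      AddSubgroup.subset_closure ⟨Equiv.swap 0 1, by rw [s3_clsF_inv]⟩
    have hSSker : clsF (Equiv.Perm (Fin 3)) (Equiv.swap 0 1) +
        clsF (Equiv.Perm (Fin 3)) (Equiv.swap 0 1) ∈ (phi (Equiv.Perm (Fin 3))).ker := by
      rw [AddMonoidHom.mem_ker, map_add, phi_clsF, ← ofMul_mul, ← map_mul,
        Equiv.swap_mul_self]
      simp
    have key : (⟨m • clsF (Equiv.Perm (Fin 3)) (Equiv.swap 0 1) +
        n • clsF (Equiv.Perm (Fin 3)) a, hz⟩ : (phi (Equiv.Perm (Fin 3))).ker) =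
        n • ⟨clsF (Equiv.Perm (Fin 3)) a, hAker⟩ +
        k • ⟨clsF (Equiv.Perm (Fin 3)) (Equiv.swap 0 1) +
          clsF (Equiv.Perm (Fin 3)) (Equiv.swap 0 1), hSSker⟩ := by
      apply Subtype.ext
      push_cast
      rw [smul_add, ← add_smul, ← hk]
      abel
    rw [key, QuotientAddGroup.mk_add, QuotientAddGroup.mk_zsmul, QuotientAddGroup.mk_zsmul]
    have hv0 : (QuotientAddGroup.mk (⟨clsF (Equiv.Perm (Fin 3)) (Equiv.swap 0 1) +
        clsF (Equiv.Perm (Fin 3)) (Equiv.swap 0 1), hSSker⟩ :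
        (phi (Equiv.Perm (Fin 3))).ker) : SOD (Equiv.Perm (Fin 3))) = 0 := by
      rw [QuotientAddGroup.eq_zero_iff, AddSubgroup.mem_addSubgroupOf]
      exact hSS
    rw [hv0, smul_zero, add_zero, hdata]
    refine AddSubgroup.zsmul_mem _ (AddSubgroup.subset_closure ?_) n
    show data [a] hmem ∈ _
    exact rfl
  · refine addOrderOf_eq_prime ?_ ?_
    · rw [two_smul]
      show (QuotientAddGroup.mk _ + QuotientAddGroup.mk _ : (phi (Equiv.Perm (Fin 3))).ker ⧸
          ((NSub (Equiv.Perm (Fin 3))).addSubgroupOf (phi (Equiv.Perm (Fin 3))).ker)) = 0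
      refine (QuotientAddGroup.mk_add _ _ _).symm.trans ((QuotientAddGroup.eq_zero_iff _).mpr ?_)
      rw [AddSubgroup.mem_addSubgroupOf]
      show sumF [a] + sumF [a] ∈ NSub (Equiv.Perm (Fin 3))
      rw [hsum]
      exact AddSubgroup.subset_closure ⟨a, by rw [s3_clsF_inv]⟩
    · intro h0
      have hN : sumF [a] ∈ NSub (Equiv.Perm (Fin 3)) := by
        unfold data at h0
        change (QuotientAddGroup.mk _ : (phi (Equiv.Perm (Fin 3))).ker ⧸
          ((NSub (Equiv.Perm (Fin 3))).addSubgroupOf (phi (Equiv.Perm (Fin 3))).ker)) = 0 at h0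
        rw [QuotientAddGroup.eq_zero_iff, AddSubgroup.mem_addSubgroupOf] at h0
        exact h0
      have hchi := chi_NSub a ha1 hN
      rw [hsum, chi_clsF a ha1, if_pos rfl] at hchi
      exact one_ne_zero hchi

end SingOrbit
end

section
/- For a finite group G, every element α of 𝔹_G satisfies 2α = 0 if and only if every complex character of G takes values in ℝ (equivalently, every character χ of a finite-dimensional complex representation of G satisfies χ(g) ∈ ℝ for all g ∈ G). -/
namespace SingOrbit

variable (G : Type*) [Group G]

variable {G}

section PartA
variable {G : Type*} [Group G]

lemma isConj_inv_of {a b : G} (h : IsConj a b) : IsConj a⁻¹ b⁻¹ := by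
  obtain ⟨c, hc⟩ := isConj_iff.mp h
  refine isConj_iff.mpr ⟨c, ?_⟩
  rw [← hc]; group

lemma mk_inv_eq_mk_inv {a b : G} (h : ConjClasses.mk a = ConjClasses.mk b) :
    ConjClasses.mk a⁻¹ = ConjClasses.mk b⁻¹ := by
  rw [ConjClasses.mk_eq_mk_iff_isConj] at h ⊢
  exact isConj_inv_of h

lemma clsF_eq_of {x : G} (h : ConjClasses.mk x ≠ 1) :
    clsF G x = FreeAbelianGroup.of ⟨ConjClasses.mk x, h⟩ := by
  rw [clsF, clsC, dif_neg h]

lemma two_nsmul_of_mem_NSub (amb : ∀ x : G, IsConj x x⁻¹) (c : NCC G) :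
    2 • FreeAbelianGroup.of c ∈ NSub G := by
  obtain ⟨x, hx⟩ := ConjClasses.exists_rep c.1
  have hx1 : ConjClasses.mk x ≠ 1 := by rw [hx]; exact c.2
  have hmk : ConjClasses.mk x⁻¹ = ConjClasses.mk x := by
    rw [ConjClasses.mk_eq_mk_iff_isConj]
    exact (amb x).symm
  have h1 : clsF G x = FreeAbelianGroup.of c := by
    rw [clsF_eq_of hx1]
    congr 1
    exact Subtype.ext hx
  have h2 : clsF G x⁻¹ = FreeAbelianGroup.of c := by
    rw [clsF, hmk, ← clsF]
    exact h1
  have : clsF G x + clsF G x⁻¹ = 2 • FreeAbelianGroup.of c := by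
    rw [h1, h2, two_nsmul]
  rw [← this]
  exact AddSubgroup.subset_closure ⟨x, rfl⟩

lemma two_nsmul_mem_NSub (amb : ∀ x : G, IsConj x x⁻¹)
    (a : FreeAbelianGroup (NCC G)) : 2 • a ∈ NSub G := by
  refine FreeAbelianGroup.induction_on a ?_ ?_ ?_ ?_
  · simpa using (NSub G).zero_mem
  · exact fun c => two_nsmul_of_mem_NSub amb c
  · intro c _
    rw [smul_neg]
    exact (NSub G).neg_mem (two_nsmul_of_mem_NSub amb c)
  · intro u v hu hv
    rw [smul_add]
    exact (NSub G).add_mem hu hv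

lemma sod_two_smul_of_amb (amb : ∀ x : G, IsConj x x⁻¹) (α : SOD G) : 2 • α = 0 := by
  obtain ⟨a, rfl⟩ := QuotientAddGroup.mk_surjective α
  suffices key : (2 • (QuotientAddGroup.mk a : (phi G).ker ⧸ ((NSub G).addSubgroupOf (phi G).ker)) :
    (phi G).ker ⧸ ((NSub G).addSubgroupOf (phi G).ker)) = 0 from key
  rw [two_nsmul, ← QuotientAddGroup.mk_add, QuotientAddGroup.eq_zero_iff,
    AddSubgroup.mem_addSubgroupOf]
  have : ((a + a : (phi G).ker) : FreeAbelianGroup (NCC G)) = 2 • (a : FreeAbelianGroup (NCC G)) := by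
    push_cast
    rw [two_nsmul]
  rw [this]
  exact two_nsmul_mem_NSub amb _

end PartA

section PartA2
variable {G : Type*} [Group G]

/-- The weight function used to detect a non-ambivalent class. -/
noncomputable def wgt (x₀ : G) : ConjClasses G → ℤ := fun c =>
  letI := Classical.dec (c = ConjClasses.mk x₀)
  letI := Classical.dec (c = ConjClasses.mk x₀⁻¹)
  if c = ConjClasses.mk x₀ then 1 else if c = ConjClasses.mk x₀⁻¹ then -1 else 0

noncomputable def psiH (x₀ : G) : FreeAbelianGroup (NCC G) →+ ℤ :=
  FreeAbelianGroup.lift fun c : NCC G => wgt x₀ c.1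

lemma psiH_clsF (x₀ : G) (hx₀ : x₀ ≠ 1) (y : G) :
    psiH x₀ (clsF G y) = wgt x₀ (ConjClasses.mk y) := by
  by_cases h : ConjClasses.mk y = 1
  · have e1 : (1 : ConjClasses G) ≠ ConjClasses.mk x₀ :=
      fun hc => hx₀ (mk_eq_one_iff.mp hc.symm)
    have e2 : (1 : ConjClasses G) ≠ ConjClasses.mk x₀⁻¹ :=
      fun hc => inv_ne_one.mpr hx₀ (mk_eq_one_iff.mp hc.symm)
    rw [clsF, clsC, dif_pos h, map_zero, h]
    simp only [wgt]
    rw [if_neg e1, if_neg e2]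
  · rw [clsF_eq_of h]
    exact FreeAbelianGroup.lift_apply_of _ _

lemma psiH_NSub (x₀ : G) (hx₀ : x₀ ≠ 1) (hnc : ¬ IsConj x₀ x₀⁻¹) :
    ∀ a ∈ NSub G, psiH x₀ a = 0 := by
  have hne : ConjClasses.mk x₀ ≠ ConjClasses.mk x₀⁻¹ :=
    fun hc => hnc (ConjClasses.mk_eq_mk_iff_isConj.mp hc)
  intro a ha
  refine AddSubgroup.closure_le ((psiH x₀).ker) |>.mpr ?_ ha
  rintro b ⟨y, rfl⟩
  simp only [AddMonoidHom.mem_ker, SetLike.mem_coe, map_add]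
  rw [psiH_clsF x₀ hx₀, psiH_clsF x₀ hx₀]
  simp only [wgt]
  by_cases h1 : ConjClasses.mk y = ConjClasses.mk x₀
  · have h2 : ConjClasses.mk y⁻¹ = ConjClasses.mk x₀⁻¹ := mk_inv_eq_mk_inv h1
    have h3 : ConjClasses.mk y⁻¹ ≠ ConjClasses.mk x₀ :=
      fun hc => hne (hc.symm.trans h2)
    rw [if_pos h1, if_neg h3, if_pos h2]
    ring
  · by_cases h2 : ConjClasses.mk y = ConjClasses.mk x₀⁻¹
    · have h3 : ConjClasses.mk y⁻¹ = ConjClasses.mk x₀ := by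
        have := mk_inv_eq_mk_inv h2
        simpa using this
      rw [if_neg h1, if_pos h2, if_pos h3]
      ring
    · have h3 : ConjClasses.mk y⁻¹ ≠ ConjClasses.mk x₀ := by
        intro h
        exact h2 (by simpa using mk_inv_eq_mk_inv h)
      have h4 : ConjClasses.mk y⁻¹ ≠ ConjClasses.mk x₀⁻¹ := by
        intro h
        exact h1 (by simpa using mk_inv_eq_mk_inv h)
      rw [if_neg h1, if_neg h2, if_neg h3, if_neg h4]
      ring

lemma amb_of_sod_two_smul [Finite G] (h : ∀ α : SOD G, 2 • α = 0) (x₀ : G) :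
    IsConj x₀ x₀⁻¹ := by
  by_contra hnc
  have hx₀ : x₀ ≠ 1 := fun h1 => hnc (by rw [h1]; simp)
  set m : ℕ := orderOf (Abelianization.of x₀) with hm
  have hmpos : 0 < m := orderOf_pos _
  have hker : m • clsF G x₀ ∈ (phi G).ker := by
    rw [AddMonoidHom.mem_ker, map_nsmul, phi_clsF]
    have hpow : (Abelianization.of x₀) ^ m = 1 := pow_orderOf_eq_one _
    rw [← ofMul_pow, hpow]
    rfl
  set α : SOD G := QuotientAddGroup.mk ⟨m • clsF G x₀, hker⟩ with hα
  have h2 : (2 • (QuotientAddGroup.mk ⟨m • clsF G x₀, hker⟩ :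
    (phi G).ker ⧸ ((NSub G).addSubgroupOf (phi G).ker)) :
    (phi G).ker ⧸ ((NSub G).addSubgroupOf (phi G).ker)) = 0 := h α
  rw [two_nsmul, ← QuotientAddGroup.mk_add, QuotientAddGroup.eq_zero_iff,
    AddSubgroup.mem_addSubgroupOf] at h2
  have h3 : ((⟨m • clsF G x₀, hker⟩ + ⟨m • clsF G x₀, hker⟩ : (phi G).ker) :
      FreeAbelianGroup (NCC G)) = (2 * m) • clsF G x₀ := by
    push_cast
    rw [two_mul, add_smul]
  rw [h3] at h2
  have h4 := psiH_NSub x₀ hx₀ hnc _ h2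
  rw [map_nsmul, psiH_clsF x₀ hx₀] at h4
  simp only [wgt] at h4
  rw [if_true] at h4
  simp only [nsmul_eq_mul, mul_one] at h4
  omega

end PartA2

section PartB1

open Module LinearMap

lemma conj_character {G : Type} [Group G] [Finite G] (V : FDRep ℂ G) (g : G) :
    (starRingEnd ℂ) (V.character g) = V.character g⁻¹ := by
  classical
  set f : Module.End ℂ V := V.ρ g with hf
  set f' : Module.End ℂ V := V.ρ g⁻¹ with hf'
  have hff' : f * f' = 1 := by rw [hf, hf', ← map_mul, mul_inv_cancel, map_one]
  have hf'f : f' * f = 1 := by rw [hf, hf', ← map_mul, inv_mul_cancel, map_one]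
  have hcomm : Commute f f' := by rw [Commute, SemiconjBy, hff', hf'f]
  set n := orderOf g with hn
  have hn0 : n ≠ 0 := (orderOf_pos g).ne'
  have hfn : f ^ n = 1 := by rw [hf, ← map_pow, hn, pow_orderOf_eq_one, map_one]
  -- f is semisimple
  have hsq : Squarefree (Polynomial.X ^ n - Polynomial.C (1 : ℂ)) :=
    (Polynomial.separable_X_pow_sub_C 1 (by exact_mod_cast hn0) one_ne_zero).squarefree
  have haev : Polynomial.aeval f (Polynomial.X ^ n - Polynomial.C (1 : ℂ)) = 0 := by
    simp [hfn]
  have hss : f.IsSemisimple := Module.End.isSemisimple_of_squarefree_aeval_eq_zero hsq haev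
  have hfss := hss.isFinitelySemisimple
  have htop : ⨆ μ, f.eigenspace μ = ⊤ := by
    have h1 := Module.End.iSup_maxGenEigenspace_eq_top f
    calc ⨆ μ, f.eigenspace μ = ⨆ μ, f.maxGenEigenspace μ := by
          refine iSup_congr fun μ => (hfss.maxGenEigenspace_eq_eigenspace μ).symm
      _ = ⊤ := h1
  have hind : iSupIndep f.eigenspace := Module.End.independent_genEigenspace f 1
  have hInt : DirectSum.IsInternal f.eigenspace :=
    (DirectSum.isInternal_submodule_iff_iSupIndep_and_iSup_eq_top _).mpr ⟨hind, htop⟩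
  have hfin : {μ : ℂ | f.eigenspace μ ≠ ⊥}.Finite :=
    WellFoundedGT.finite_ne_bot_of_iSupIndep hind
  have hmapsf : ∀ μ : ℂ, Set.MapsTo f (f.eigenspace μ) (f.eigenspace μ) :=
    fun μ => Module.End.mapsTo_genEigenspace_of_comm rfl μ 1
  have hmapsf' : ∀ μ : ℂ, Set.MapsTo f' (f.eigenspace μ) (f.eigenspace μ) :=
    fun μ => Module.End.mapsTo_genEigenspace_of_comm hcomm μ 1
  have hμ : ∀ μ : ℂ, μ ∈ hfin.toFinset → μ ^ n = 1 := by
    intro μ hmem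
    rw [Set.Finite.mem_toFinset] at hmem
    obtain ⟨v, hv, hv0⟩ := Submodule.exists_mem_ne_zero_of_ne_bot hmem
    have hev : f.HasEigenvector μ v := ⟨hv, hv0⟩
    have h1 : (f ^ n) v = μ ^ n • v := hev.pow_apply n
    rw [hfn] at h1
    have h2 : (1 : ℂ) • v = μ ^ n • v := by simpa using h1
    by_contra hne
    exact hv0 (by
      have := sub_eq_zero.mpr h2
      rw [← sub_smul] at this
      rcases smul_eq_zero.mp this with h | h
      · exact absurd (by linear_combination -h : μ ^ n = 1) hne
      · exact absurd h hv0)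
  have htrf : V.character g =
      ∑ μ ∈ hfin.toFinset, μ * (finrank ℂ (f.eigenspace μ) : ℂ) := by
    show LinearMap.trace ℂ V f = _
    rw [trace_eq_sum_trace_restrict' hInt hfin hmapsf]
    refine Finset.sum_congr rfl fun μ _ => ?_
    have hres : f.restrict (hmapsf μ) = μ • LinearMap.id := by
      ext ⟨v, hv⟩
      simp [LinearMap.restrict_apply, Module.End.mem_eigenspace_iff.mp hv]
      exact Module.End.mem_eigenspace_iff.mp hv
    rw [hres, map_smul, trace_id, smul_eq_mul]
  have htrf' : V.character g⁻¹ =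
      ∑ μ ∈ hfin.toFinset, μ⁻¹ * (finrank ℂ (f.eigenspace μ) : ℂ) := by
    show LinearMap.trace ℂ V f' = _
    rw [trace_eq_sum_trace_restrict' hInt hfin hmapsf']
    refine Finset.sum_congr rfl fun μ hmem => ?_
    have hμ0 : μ ≠ 0 := by
      intro h0
      have := hμ μ hmem
      rw [h0, zero_pow hn0] at this
      exact zero_ne_one this
    have hres : f'.restrict (hmapsf' μ) = μ⁻¹ • LinearMap.id := by
      ext ⟨v, hv⟩
      simp only [LinearMap.restrict_apply, LinearMap.smul_apply, LinearMap.id_apply,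
        SetLike.val_smul]
      show f' v = μ⁻¹ • v
      have hfv : f (f' v) = v := by
        rw [← Module.End.mul_apply, hff', Module.End.one_apply]
      have hfv2 : f (μ⁻¹ • v) = v := by
        rw [map_smul, Module.End.mem_eigenspace_iff.mp hv, smul_smul,
          inv_mul_cancel₀ hμ0, one_smul]
      have hinj : Function.Injective f := by
        intro a b hab
        have := congrArg f' hab
        rwa [← Module.End.mul_apply, ← Module.End.mul_apply, hf'f,
          Module.End.one_apply, Module.End.one_apply] at this
      exact hinj (hfv.trans hfv2.symm)
    rw [hres, map_smul, trace_id, smul_eq_mul]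
  rw [htrf, htrf', map_sum]
  refine Finset.sum_congr rfl fun μ hmem => ?_
  rw [map_mul, Complex.conj_natCast]
  congr 1
  rw [← Complex.inv_eq_conj (Complex.norm_eq_one_of_pow_eq_one (hμ μ hmem) hn0)]

end PartB1

section PartB2

open Finset

variable {G : Type} [Group G] [Fintype G] [DecidableEq G]

lemma pow_mod_eq {M : Type*} [Monoid M] {u : M} {n : ℕ} (hu : u ^ n = 1) (a : ℕ) :
    u ^ a = u ^ (a % n) := by
  conv_lhs => rw [← Nat.div_add_mod a n]
  rw [pow_add, pow_mul, hu, one_pow, one_mul]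

lemma pow_val_add {M : Type*} [Monoid M] {u : M} {n : ℕ} [NeZero n] (hu : u ^ n = 1)
    (a b : ZMod n) : u ^ (a + b).val = u ^ a.val * u ^ b.val := by
  rw [← pow_add, pow_mod_eq hu ((a + b).val), pow_mod_eq hu (a.val + b.val), ZMod.val_add,
    Nat.mod_mod_of_dvd _ dvd_rfl]

lemma pow_mul_val_add {M : Type*} [Monoid M] {u : M} {n : ℕ} [NeZero n] (hu : u ^ n = 1)
    (j : ℕ) (a b : ZMod n) :
    u ^ (j * (a + b).val) = u ^ (j * a.val) * u ^ (j * b.val) := by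
  have hj : (u ^ j) ^ n = 1 := by rw [← pow_mul, mul_comm, pow_mul, hu, one_pow]
  rw [pow_mul, pow_mul, pow_mul, pow_val_add hj]

/-- The right regular representation of `G` on `G → ℂ`. -/
def rreg : Representation ℂ G (G → ℂ) where
  toFun a :=
    { toFun := fun f y => f (y * a)
      map_add' := fun _ _ => rfl
      map_smul' := fun _ _ => rfl }
  map_one' := by
    refine LinearMap.ext fun f => funext fun y => ?_
    show f (y * 1) = f y
    rw [mul_one]
  map_mul' a b := by
    refine LinearMap.ext fun f => funext fun y => ?_
    show f (y * (a * b)) = f (y * a * b)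
    rw [mul_assoc]

lemma rreg_apply (a : G) (f : G → ℂ) (y : G) : rreg a f y = f (y * a) := rfl

/-- Left translation as a linear endomorphism of `G → ℂ`. -/
def ltrans (h : G) : (G → ℂ) →ₗ[ℂ] (G → ℂ) where
  toFun := fun f y => f (h * y)
  map_add' := fun _ _ => rfl
  map_smul' := fun _ _ => rfl

variable (x : G) [NeZero (orderOf x)] (j : ℕ)

/-- A primitive `orderOf x`-th root of unity. -/
noncomputable def zet : ℂ := Complex.exp (2 * Real.pi * Complex.I / (orderOf x))

lemma zet_prim : IsPrimitiveRoot (zet x) (orderOf x) :=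
  Complex.isPrimitiveRoot_exp _ (NeZero.ne _)

lemma zet_pow_n : (zet x) ^ (orderOf x) = 1 := (zet_prim x).pow_eq_one

/-- The projection onto an isotypic piece for the cyclic group generated by `x`,
inside the right regular representation. -/
noncomputable def Pmap : (G → ℂ) →ₗ[ℂ] (G → ℂ) :=
  (orderOf x : ℂ)⁻¹ • ∑ k : ZMod (orderOf x), zet x ^ (j * k.val) • ltrans (x ^ k.val)

lemma Pmap_apply (f : G → ℂ) (y : G) :
    Pmap x j f y = (orderOf x : ℂ)⁻¹ *
      ∑ k : ZMod (orderOf x), zet x ^ (j * k.val) * f (x ^ k.val * y) := by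
  simp only [Pmap, LinearMap.smul_apply, LinearMap.sum_apply, Pi.smul_apply, smul_eq_mul,
    Finset.sum_apply]
  rfl

lemma Pmap_idem : Pmap x j ∘ₗ Pmap x j = Pmap x j := by
  refine LinearMap.ext fun f => funext fun y => ?_
  rw [LinearMap.comp_apply]
  simp only [Pmap_apply]
  have hn : (orderOf x : ℂ) ≠ 0 := Nat.cast_ne_zero.mpr (NeZero.ne _)
  have key : ∀ k : ZMod (orderOf x),
      zet x ^ (j * k.val) *
        ((orderOf x : ℂ)⁻¹ * ∑ l : ZMod (orderOf x),
          zet x ^ (j * l.val) * f (x ^ l.val * (x ^ k.val * y))) =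
      (orderOf x : ℂ)⁻¹ * ∑ m : ZMod (orderOf x), zet x ^ (j * m.val) * f (x ^ m.val * y) := by
    intro k
    rw [← Equiv.sum_comp (Equiv.addRight k)
      (fun m => zet x ^ (j * m.val) * f (x ^ m.val * y))]
    simp only [Equiv.coe_addRight]
    rw [Finset.mul_sum, Finset.mul_sum, Finset.mul_sum]
    refine Finset.sum_congr rfl fun l _ => ?_
    rw [pow_mul_val_add (zet_pow_n x) j, pow_val_add (pow_orderOf_eq_one x), mul_assoc,
      mul_assoc]
    ring
  rw [Finset.sum_congr rfl fun k _ => key k, Finset.sum_const, Finset.card_univ, ZMod.card,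
    nsmul_eq_mul, ← mul_assoc, ← mul_assoc, inv_mul_cancel₀ hn, one_mul]

lemma rreg_Pmap_comm (a : G) : rreg a ∘ₗ Pmap x j = Pmap x j ∘ₗ rreg (G := G) a := by
  refine LinearMap.ext fun f => funext fun y => ?_
  rw [LinearMap.comp_apply, LinearMap.comp_apply]
  simp only [Pmap_apply, rreg_apply]
  simp [Pmap_apply, rreg_apply, mul_assoc]


section PartB2b
open Finset

variable {G : Type} [Group G] [Fintype G] [DecidableEq G]
variable (x : G) [NeZero (orderOf x)] (j : ℕ)

lemma rreg_mapsTo (a : G) :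
    ∀ v ∈ LinearMap.range (Pmap x j), rreg a v ∈ LinearMap.range (Pmap x j) := by
  rintro v ⟨w, rfl⟩
  refine ⟨rreg a w, ?_⟩
  have := congrArg (fun (T : (G → ℂ) →ₗ[ℂ] (G → ℂ)) => T w) (rreg_Pmap_comm x j a)
  simpa using this.symm

/-- The isotypic subrepresentation. -/
noncomputable def subRep : Representation ℂ G ↥(LinearMap.range (Pmap x j)) where
  toFun a := (rreg a).restrict (rreg_mapsTo x j a)
  map_one' := by
    refine LinearMap.ext fun v => Subtype.ext ?_
    simp [LinearMap.restrict_apply, rreg_apply]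
  map_mul' a b := by
    refine LinearMap.ext fun v => Subtype.ext ?_
    simp only [LinearMap.restrict_apply, Module.End.mul_apply, map_mul]

/-- The finite-dimensional representation attached to `x` and `j`. -/
noncomputable def Vrep : FDRep ℂ G := FDRep.of (subRep x j)

lemma Pmap_fix : ∀ v : G → ℂ, v ∈ LinearMap.range (Pmap x j) → Pmap x j v = v := by
  rintro v ⟨w, rfl⟩
  have := congrArg (fun (T : (G → ℂ) →ₗ[ℂ] (G → ℂ)) => T w) (Pmap_idem x j)
  simpa using this

lemma Vrep_char (a : G) :
    (Vrep x j).character a =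
      LinearMap.trace ℂ (G → ℂ) (rreg a ∘ₗ Pmap x j) := by
  have hchar : (Vrep x j).character a =
      LinearMap.trace ℂ ↥(LinearMap.range (Pmap x j)) ((rreg a).restrict (rreg_mapsTo x j a)) :=
    rfl
  rw [hchar]
  set p := Pmap x j with hp
  set q : (G → ℂ) →ₗ[ℂ] ↥(LinearMap.range p) :=
    p.codRestrict (LinearMap.range p) (fun v => LinearMap.mem_range_self p v) with hq
  have hres : (rreg a).restrict (rreg_mapsTo x j a) =
      q ∘ₗ (rreg a ∘ₗ (LinearMap.range p).subtype) := by
    refine LinearMap.ext fun v => Subtype.ext ?_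
    simp only [LinearMap.restrict_apply, LinearMap.comp_apply, Submodule.subtype_apply,
      LinearMap.codRestrict_apply, hq]
    exact (Pmap_fix x j _ (rreg_mapsTo x j a v.1 v.2)).symm
  rw [hres, LinearMap.trace_comp_comm']
  congr 1

lemma Vrep_char_formula (a : G) :
    (Vrep x j).character a = (orderOf x : ℂ)⁻¹ *
      ∑ k : ZMod (orderOf x),
        zet x ^ (j * k.val) *
          ((Finset.univ.filter fun y : G => x ^ k.val * (y * a) = y).card : ℂ) := by
  rw [Vrep_char, LinearMap.trace_eq_matrix_trace ℂ (Pi.basisFun ℂ G), Matrix.trace]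
  have hdiag : ∀ y : G,
      ((LinearMap.toMatrix (Pi.basisFun ℂ G) (Pi.basisFun ℂ G)) (rreg a ∘ₗ Pmap x j)).diag y =
      (orderOf x : ℂ)⁻¹ * ∑ k : ZMod (orderOf x),
        zet x ^ (j * k.val) * (if x ^ k.val * (y * a) = y then 1 else 0) := by
    intro y
    rw [Matrix.diag_apply, LinearMap.toMatrix_apply, Pi.basisFun_repr, LinearMap.comp_apply]
    rw [rreg_apply, Pmap_apply]
    congr 1
    refine Finset.sum_congr rfl fun k _ => ?_
    congr 1
    rw [Pi.basisFun_apply, Pi.single_apply]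
  rw [Finset.sum_congr rfl fun y _ => hdiag y]
  rw [← Finset.mul_sum, Finset.sum_comm]
  congr 1
  refine Finset.sum_congr rfl fun k _ => ?_
  rw [← Finset.mul_sum]
  congr 1
  rw [Finset.sum_boole]

end PartB2b

section Fourier
open Finset

lemma val_add_neg_dvd {n : ℕ} [NeZero n] (k : ZMod n) : n ∣ k.val + (-k).val := by
  have h : ((k.val + (-k).val : ℕ) : ZMod n) = 0 := by
    push_cast
    rw [ZMod.natCast_val, ZMod.natCast_val, ZMod.cast_id, ZMod.cast_id]
    ring
  exact (ZMod.natCast_eq_zero_iff _ _).mp h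

lemma zeta_mul_zeta_neg {n : ℕ} [NeZero n] {ζ : ℂ} (hζ : ζ ^ n = 1) (j : ℕ) (k : ZMod n) :
    ζ ^ (j * k.val) * ζ ^ (j * (-k).val) = 1 := by
  rw [← pow_add, ← mul_add]
  obtain ⟨c, hc⟩ := val_add_neg_dvd k
  rw [hc, ← mul_assoc, mul_comm j n, mul_assoc, pow_mul, hζ, one_pow]

/-- Fourier inversion on `ZMod n`. -/
lemma fourier_zero {n : ℕ} [NeZero n] {ζ : ℂ} (hζ : IsPrimitiveRoot ζ n)
    (e : ZMod n → ℂ) (hE : ∀ j : ℕ, ∑ k : ZMod n, ζ ^ (j * k.val) * e k = 0) (m : ZMod n) :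
    e m = 0 := by
  have hζn : ζ ^ n = 1 := hζ.pow_eq_one
  have h0 : ∑ j ∈ Finset.range n, ζ ^ (j * (-m).val) * ∑ k : ZMod n, ζ ^ (j * k.val) * e k
      = 0 := by
    refine Finset.sum_eq_zero fun j _ => ?_
    rw [hE j, mul_zero]
  have h1 : ∀ j : ℕ, ζ ^ (j * (-m).val) * ∑ k : ZMod n, ζ ^ (j * k.val) * e k
      = ∑ k : ZMod n, (ζ ^ ((-m).val + k.val)) ^ j * e k := by
    intro j
    rw [Finset.mul_sum]
    refine Finset.sum_congr rfl fun k _ => ?_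
    rw [← mul_assoc, ← pow_add, ← mul_add, mul_comm j, pow_mul]
  rw [Finset.sum_congr rfl fun j _ => h1 j, Finset.sum_comm] at h0
  have h2 : ∀ k : ZMod n,
      ∑ j ∈ Finset.range n, (ζ ^ ((-m).val + k.val)) ^ j * e k
      = (if k = m then (n : ℂ) else 0) * e k := by
    intro k
    rw [← Finset.sum_mul]
    congr 1
    by_cases hk : k = m
    · subst hk
      have : ζ ^ ((-k).val + k.val) = 1 := by
        obtain ⟨c, hc⟩ := val_add_neg_dvd k
        rw [add_comm] at hc
        rw [hc, pow_mul, hζn, one_pow]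
      rw [this]
      simp [if_pos rfl]
    · have hw1 : ζ ^ ((-m).val + k.val) ≠ 1 := by
        intro h
        have hdvd := (hζ.pow_eq_one_iff_dvd _).mp h
        have : (((-m).val + k.val : ℕ) : ZMod n) = 0 :=
          (ZMod.natCast_eq_zero_iff _ _).mpr hdvd
        push_cast at this
        rw [ZMod.natCast_val, ZMod.natCast_val, ZMod.cast_id, ZMod.cast_id] at this
        apply hk
        linear_combination this
      have hwn : (ζ ^ ((-m).val + k.val)) ^ n = 1 := by
        rw [← pow_mul, mul_comm, pow_mul, hζn, one_pow]
      rw [geom_sum_eq hw1, hwn, sub_self, zero_div, if_neg hk]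
  rw [Finset.sum_congr rfl fun k _ => h2 k] at h0
  have h3 : ∑ k : ZMod n, (if k = m then (n : ℂ) else 0) * e k = (n : ℂ) * e m := by
    rw [Finset.sum_eq_single m]
    · rw [if_pos rfl]
    · intro b _ hb
      rw [if_neg hb, zero_mul]
    · intro h
      exact absurd (Finset.mem_univ m) h
  rw [h3] at h0
  have hn : (n : ℂ) ≠ 0 := Nat.cast_ne_zero.mpr (NeZero.ne _)
  exact (mul_eq_zero.mp h0).resolve_left hn

end Fourier

section Main
open Finset

lemma amb_of_real_char {G : Type} [Group G] [Finite G]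
    (hreal : ∀ (V : FDRep ℂ G) (g : G), ∃ r : ℝ, V.character g = (r : ℂ)) (x : G) :
    IsConj x x⁻¹ := by
  classical
  letI : Fintype G := Fintype.ofFinite G
  by_cases hx1 : x = 1
  · subst hx1; rw [inv_one]
  have hn0 : orderOf x ≠ 0 := (orderOf_pos x).ne'
  have hn1 : orderOf x ≠ 1 := fun h => hx1 (orderOf_eq_one_iff.mp h)
  haveI : NeZero (orderOf x) := ⟨hn0⟩
  set n := orderOf x with hn
  set ζ := zet x with hζdef
  have hζn : ζ ^ n = 1 := zet_pow_n x
  have hζprim : IsPrimitiveRoot ζ n := zet_prim x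
  set D : ZMod n → ℕ :=
    fun k => (Finset.univ.filter fun y : G => x ^ k.val * (y * x) = y).card with hD
  -- each twisted character is real, yielding the key linear relations
  have hE : ∀ j : ℕ,
      ∑ k : ZMod n, ζ ^ (j * k.val) * ((D k : ℂ) - (D (-k) : ℂ)) = 0 := by
    intro j
    obtain ⟨r, hr⟩ := hreal (Vrep x j) x
    have hform := Vrep_char_formula x j x
    set S : ℂ := ∑ k : ZMod n, ζ ^ (j * k.val) * (D k : ℂ) with hS
    have hSr : S = (n : ℂ) * r := by
      have hninv : ((n : ℂ))⁻¹ * S = (r : ℂ) := by rw [← hform, ← hr]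
      have hnne : (n : ℂ) ≠ 0 := Nat.cast_ne_zero.mpr hn0
      field_simp at hninv
      linear_combination hninv
    have hconj : (starRingEnd ℂ) S = S := by
      rw [hSr, map_mul, Complex.conj_natCast, Complex.conj_ofReal]
    have hz : ∀ k : ZMod n, (starRingEnd ℂ) (ζ ^ (j * k.val)) = ζ ^ (j * (-k).val) := by
      intro k
      have hnorm : ‖ζ ^ (j * k.val)‖ = 1 := by
        rw [norm_pow, Complex.norm_eq_one_of_pow_eq_one hζn hn0, one_pow]
      rw [← Complex.inv_eq_conj hnorm]
      exact inv_eq_of_mul_eq_one_right (zeta_mul_zeta_neg hζn j k)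
    have hconj2 : (starRingEnd ℂ) S = ∑ k : ZMod n, ζ ^ (j * k.val) * (D (-k) : ℂ) := by
      rw [hS, map_sum]
      have step : ∀ k : ZMod n,
          (starRingEnd ℂ) (ζ ^ (j * k.val) * (D k : ℂ)) = ζ ^ (j * (-k).val) * (D k : ℂ) := by
        intro k
        rw [map_mul, Complex.conj_natCast, hz]
      rw [Finset.sum_congr rfl fun k _ => step k]
      rw [← Equiv.sum_comp (Equiv.neg (ZMod n))
        (fun k => ζ ^ (j * k.val) * (D (-k) : ℂ))]
      refine Finset.sum_congr rfl fun k _ => ?_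
      simp
    have : ∑ k : ZMod n, ζ ^ (j * k.val) * (D (-k) : ℂ) = S := by
      rw [← hconj2, hconj]
    calc ∑ k : ZMod n, ζ ^ (j * k.val) * ((D k : ℂ) - (D (-k) : ℂ))
        = S - ∑ k : ZMod n, ζ ^ (j * k.val) * (D (-k) : ℂ) := by
          rw [hS, ← Finset.sum_sub_distrib]
          refine Finset.sum_congr rfl fun k _ => ?_
          ring
      _ = 0 := by rw [this, sub_self]
  -- Fourier inversion gives D k = D (-k)
  have hDD : ∀ m : ZMod n, (D m : ℂ) = (D (-m) : ℂ) := by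
    intro m
    have := fourier_zero hζprim (fun k => (D k : ℂ) - (D (-k) : ℂ)) hE m
    linear_combination this
  -- the class of x⁻¹ contains x: use m = 1
  have hval1 : (1 : ZMod n).val = 1 := ZMod.val_one'' hn1
  -- x ^ (-1).val = x⁻¹
  have hxneg : x ^ ((-1 : ZMod n)).val = x⁻¹ := by
    have h1 : x ^ ((1 : ZMod n)).val * x ^ ((-1 : ZMod n)).val = 1 := by
      rw [← pow_add]
      obtain ⟨c, hc⟩ := val_add_neg_dvd (1 : ZMod n)
      rw [hc, pow_mul, pow_orderOf_eq_one, one_pow]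
    rw [hval1, pow_one] at h1
    rw [← (Commute.pow_self x ((-1 : ZMod n)).val).eq] at h1
    exact eq_inv_of_mul_eq_one_left h1
  have hDneg : D (-1) ≠ 0 := by
    have hpos : 0 < D (-1) := Finset.card_pos.mpr ⟨1, by
      simp only [Finset.mem_filter, Finset.mem_univ, true_and, hxneg, one_mul,
        inv_mul_cancel]⟩
    omega
  have hD1 : D 1 ≠ 0 := by
    intro h0
    apply hDneg
    have := hDD 1
    rw [h0] at this
    exact_mod_cast this.symm
  obtain ⟨y, hy⟩ : ∃ y : G, x ^ ((1 : ZMod n)).val * (y * x) = y := by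
    obtain ⟨y, hy⟩ := Finset.card_pos.mp (Nat.pos_of_ne_zero hD1)
    rw [Finset.mem_filter] at hy
    exact ⟨y, hy.2⟩
  rw [hval1, pow_one] at hy
  have hxy : x * y = y * x⁻¹ := by
    have h2 : x * y * x = y := by rw [mul_assoc]; exact hy
    exact eq_mul_inv_of_mul_eq h2
  refine isConj_iff.mpr ⟨y⁻¹, ?_⟩
  rw [inv_inv, mul_assoc, hxy, ← mul_assoc, inv_mul_cancel, one_mul]

end Main
end PartB2

/-- `𝔹_G` consists of elements of order dividing two if and only if every
complex character of `G` takes real values. -/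
theorem stmt15 (G : Type) [Group G] [Finite G] :
    (∀ α : SOD G, 2 • α = 0) ↔
      (∀ (V : FDRep ℂ G) (g : G), ∃ r : ℝ, V.character g = (r : ℂ)) := by
  constructor
  · intro h V g
    have amb := amb_of_sod_two_smul h
    have hc : V.character g⁻¹ = V.character g := by
      obtain ⟨c, hcc⟩ := isConj_iff.mp (amb g)
      rw [← hcc, FDRep.char_conj]
    have hconj : (starRingEnd ℂ) (V.character g) = V.character g := by
      rw [conj_character, hc]
    exact ⟨(V.character g).re, (Complex.conj_eq_iff_re.mp hconj).symm⟩
  · intro hreal α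
    exact sod_two_smul_of_amb (fun x => amb_of_real_char hreal x) α

end SingOrbit
end
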